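/- Let F : ℝ^n → ℝ, A ∈ ℝ^{p×n}, b ∈ ℝ^p, and let (x*, λ*) ∈ ℝ^n × ℝ^p satisfy F(x) − F(x*) − ⟨λ*, Ax − b⟩ ≥ 0 for all x ∈ ℝ^n. If a point x̄ ∈ ℝ^n satisfies F(x̄) − F(x*) + γ‖Ax̄ − b‖ ≤ ε for some ε ≥ 0 and γ > ‖λ*‖, then ‖Ax̄ − b‖ ≤ ε/(γ − ‖λ*‖) and −‖λ*‖ε/(γ − ‖λ*‖) ≤ F(x̄) − F(x*) ≤ ε. -/

import Mathlib

open Matrix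

/-- Euclidean norm of a vector in `ℝ^n` represented as `Fin n → ℝ`. -/
noncomputable def enorm2 {n : ℕ} (v : Fin n → ℝ) : ℝ := Real.sqrt (v ⬝ᵥ v)

lemma enorm2_nonneg {n : ℕ} (v : Fin n → ℝ) : 0 ≤ enorm2 v := Real.sqrt_nonneg _

lemma enorm2_eq_norm {n : ℕ} (v : Fin n → ℝ) :
    enorm2 v = ‖(EuclideanSpace.equiv (Fin n) ℝ).symm v‖ := by
  rw [EuclideanSpace.norm_eq]
  unfold enorm2 dotProduct
  congr 1
  apply Finset.sum_congr rfl
  intro i _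
  simp [sq_abs, sq]

lemma neg_cs {n : ℕ} (l w : Fin n → ℝ) :
    -(enorm2 l * enorm2 w) ≤ l ⬝ᵥ w := by
  have h := abs_real_inner_le_norm ((EuclideanSpace.equiv (Fin n) ℝ).symm l)
    ((EuclideanSpace.equiv (Fin n) ℝ).symm w)
  have hin : inner ℝ ((EuclideanSpace.equiv (Fin n) ℝ).symm l)
      ((EuclideanSpace.equiv (Fin n) ℝ).symm w) = l ⬝ᵥ w := by
    simp [PiLp.inner_apply, dotProduct, mul_comm]
  rw [hin, ← enorm2_eq_norm, ← enorm2_eq_norm] at h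
  cases abs_le.mp h with
  | intro h1 h2 => linarith

/-- If `(x*, λ*)` satisfies `F(x) − F(x*) − ⟨λ*, Ax − b⟩ ≥ 0` for all `x`, and
`F(x̄) − F(x*) + γ‖Ax̄ − b‖ ≤ ε` with `ε ≥ 0` and `γ > ‖λ*‖`, then
`‖Ax̄ − b‖ ≤ ε/(γ − ‖λ*‖)` and `−‖λ*‖ε/(γ − ‖λ*‖) ≤ F(x̄) − F(x*) ≤ ε`. -/
theorem stmt_2 {n p : ℕ} (F : (Fin n → ℝ) → ℝ)
    (A : Matrix (Fin p) (Fin n) ℝ) (b : Fin p → ℝ)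
    (xstar : Fin n → ℝ) (lamstar : Fin p → ℝ)
    (hopt : ∀ x : Fin n → ℝ, 0 ≤ F x - F xstar - lamstar ⬝ᵥ (A *ᵥ x - b))
    (xbar : Fin n → ℝ) (ε γ : ℝ) (hε : 0 ≤ ε) (hγ : enorm2 lamstar < γ)
    (hbd : F xbar - F xstar + γ * enorm2 (A *ᵥ xbar - b) ≤ ε) :
    enorm2 (A *ᵥ xbar - b) ≤ ε / (γ - enorm2 lamstar) ∧
      -(enorm2 lamstar * ε) / (γ - enorm2 lamstar) ≤ F xbar - F xstar ∧
      F xbar - F xstar ≤ ε := by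
  set L := enorm2 lamstar with hL
  set N := enorm2 (A *ᵥ xbar - b) with hN
  have hL0 : 0 ≤ L := enorm2_nonneg _
  have hN0 : 0 ≤ N := enorm2_nonneg _
  have hcs : -(L * N) ≤ lamstar ⬝ᵥ (A *ᵥ xbar - b) := neg_cs _ _
  have h1 : -(L * N) ≤ F xbar - F xstar := by
    have := hopt xbar; linarith
  have hpos : 0 < γ - L := by linarith
  have hNle : N ≤ ε / (γ - L) := by
    rw [le_div_iff₀ hpos]; nlinarith
  refine ⟨hNle, ?_, ?_⟩
  · have h2 : L * N ≤ L * (ε / (γ - L)) := mul_le_mul_of_nonneg_left hNle hL0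
    have h3 : L * (ε / (γ - L)) = L * ε / (γ - L) := mul_div_assoc L ε (γ - L) |>.symm
    rw [neg_div]
    linarith
  · nlinarith
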